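/- (Lindeberg condition.) Assume Re(Φ_1) < 1/2 and set v_n = Σ_{k=1}^{n−1} 1/|a_{k+1}|². Then for every ε > 0, (1/v_n) · Σ_{k=1}^{n−1} E( |ΔM_k|² · 1_{|ΔM_k| ≥ ε √v_n} | F_k ) → 0 in probability as n → ∞. -/

import Mathlib

open MeasureTheory ProbabilityTheory Filter Real
open scoped NNReal ENNReal Topology

private lemma erw_aux (c q : ℝ) (u : ℕ → ℝ) (hq0 : 0 ≤ q) (hq1 : q ≤ 1)
    (hc1 : -1 ≤ c) (hc2 : 2 * c < 1)
    (hu : ∀ j : ℕ, 1 ≤ j → u j = 1 + 2 * c / j + q / (j : ℝ) ^ 2)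
    (hupos : ∀ j : ℕ, 1 ≤ j → 0 < u j) :
    ∀ η > (0:ℝ), ∀ᶠ n : ℕ in atTop,
      (0 < ∑ k ∈ Finset.Icc 1 (n - 1), ∏ j ∈ Finset.Icc 1 k, (u j)⁻¹) ∧
      ∀ k ∈ Finset.Icc 1 (n - 1),
        ∏ j ∈ Finset.Icc 1 k, (u j)⁻¹ ≤
          η * ∑ k ∈ Finset.Icc 1 (n - 1), ∏ j ∈ Finset.Icc 1 k, (u j)⁻¹ := by
  set b : ℕ → ℝ := fun k => ∏ j ∈ Finset.Icc 1 k, (u j)⁻¹ with hb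
  set V : ℕ → ℝ := fun n => ∑ k ∈ Finset.Icc 1 (n - 1), b k with hV
  have hbpos : ∀ k, 0 < b k := by
    intro k
    refine Finset.prod_pos fun j hj => ?_
    exact inv_pos.mpr (hupos j (Finset.mem_Icc.mp hj).1)
  have hVmono : ∀ {m n : ℕ}, m ≤ n → V m ≤ V n := by
    intro m n hmn
    refine Finset.sum_le_sum_of_subset_of_nonneg ?_ fun k _ _ => (hbpos k).le
    exact Finset.Icc_subset_Icc le_rfl (by omega)
  -- lower exponential bound on u
  have hexp : ∀ j : ℕ, 4 ≤ j → Real.exp (-(4 / (j:ℝ))) ≤ u j := by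
    intro j hj
    have ht : (4:ℝ) ≤ (j:ℝ) := by exact_mod_cast hj
    have ht0 : (0:ℝ) < (j:ℝ) := by linarith
    have he : 1 + 4 / (j:ℝ) ≤ Real.exp (4 / (j:ℝ)) := by
      have := Real.add_one_le_exp (4 / (j:ℝ)); linarith
    have h1 : Real.exp (-(4 / (j:ℝ))) = (Real.exp (4 / (j:ℝ)))⁻¹ := Real.exp_neg _
    have h2 : (Real.exp (4 / (j:ℝ)))⁻¹ ≤ (1 + 4 / (j:ℝ))⁻¹ := by
      apply inv_anti₀ (by positivity) he
    have h3 : (1 + 4 / (j:ℝ))⁻¹ ≤ 1 - 2 / (j:ℝ) := by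
      rw [inv_eq_one_div, div_le_iff₀ (by positivity)]
      have h8 : 8 / (j:ℝ)^2 ≤ 2 / (j:ℝ) := by
        rw [div_le_div_iff₀ (by positivity) ht0]
        nlinarith
      have : (1 - 2 / (j:ℝ)) * (1 + 4 / (j:ℝ)) = 1 + 2/(j:ℝ) - 8/(j:ℝ)^2 := by
        field_simp; ring
      rw [this]; linarith
    have h4 : 1 - 2 / (j:ℝ) ≤ u j := by
      rw [hu j (by omega)]
      have h5 : (-2) / (j:ℝ) ≤ 2 * c / (j:ℝ) := by gcongr; linarith
      have h5' : (-2) / (j:ℝ) = -(2 / (j:ℝ)) := by ring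
      have h6 : 0 ≤ q / (j:ℝ)^2 := by positivity
      rw [h5'] at h5; linarith
    linarith
  -- dyadic comparison
  have hcomp : ∀ j k : ℕ, 4 ≤ j → j ≤ k → k ≤ 2 * j → b k ≤ Real.exp 4 * b j := by
    intro j k h4j hjk hk2j
    have hsplit : b j * ∏ i ∈ Finset.Ioc j k, (u i)⁻¹ = b k := by
      rw [hb]
      simp only [show ∀ m:ℕ, Finset.Icc 1 m = Finset.Ioc 0 m from fun m => by
        rw [← Finset.Icc_add_one_left_eq_Ioc, zero_add]]
      exact Finset.prod_Ioc_consecutive _ (Nat.zero_le j) hjk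
    have hfac : ∀ i ∈ Finset.Ioc j k, (u i)⁻¹ ≤ Real.exp (4 / ((j:ℝ) + 1)) := by
      intro i hi
      obtain ⟨hji, hik⟩ := Finset.mem_Ioc.mp hi
      have h4i : 4 ≤ i := by omega
      have hui := hexp i h4i
      have huipos := hupos i (by omega)
      have : (u i)⁻¹ ≤ (Real.exp (-(4 / (i:ℝ))))⁻¹ := inv_anti₀ (Real.exp_pos _) hui
      rw [← Real.exp_neg, neg_neg] at this
      refine this.trans (Real.exp_le_exp.mpr ?_)
      have hji' : (j:ℝ) + 1 ≤ (i:ℝ) := by exact_mod_cast hji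
      gcongr
    have hprod : ∏ i ∈ Finset.Ioc j k, (u i)⁻¹ ≤
        Real.exp (4 / ((j:ℝ) + 1)) ^ (k - j) := by
      have h0 : ∀ i ∈ Finset.Ioc j k, 0 ≤ (u i)⁻¹ := by
        intro i hi
        exact (inv_pos.mpr (hupos i (by
          have := (Finset.mem_Ioc.mp hi).1; omega))).le
      calc ∏ i ∈ Finset.Ioc j k, (u i)⁻¹
          ≤ ∏ _i ∈ Finset.Ioc j k, Real.exp (4 / ((j:ℝ) + 1)) :=
            Finset.prod_le_prod h0 hfac
        _ = Real.exp (4 / ((j:ℝ) + 1)) ^ (k - j) := by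
            rw [Finset.prod_const, Nat.card_Ioc]
    have hpow : Real.exp (4 / ((j:ℝ) + 1)) ^ (k - j) ≤ Real.exp 4 := by
      rw [← Real.exp_nat_mul]
      apply Real.exp_le_exp.mpr
      have hkj : ((k - j : ℕ) : ℝ) ≤ (j:ℝ) + 1 := by
        have : (k - j : ℕ) ≤ j + 1 := by omega
        exact_mod_cast this
      have hj1 : (0:ℝ) < (j:ℝ) + 1 := by positivity
      calc ((k - j : ℕ) : ℝ) * (4 / ((j:ℝ) + 1))
          ≤ ((j:ℝ) + 1) * (4 / ((j:ℝ) + 1)) := by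
            apply mul_le_mul_of_nonneg_right hkj (by positivity)
        _ = 4 := by field_simp
    calc b k = b j * ∏ i ∈ Finset.Ioc j k, (u i)⁻¹ := hsplit.symm
      _ ≤ b j * Real.exp 4 := by
          apply mul_le_mul_of_nonneg_left (hprod.trans hpow) (hbpos j).le
      _ = Real.exp 4 * b j := mul_comm _ _
  -- tail self bound
  have htail : ∀ k : ℕ, 8 ≤ k → b k ≤ (2 * Real.exp 4 / (k:ℝ)) * V (k + 1) := by
    intro k hk
    have hksub : V (k+1) = ∑ i ∈ Finset.Icc 1 k, b i := by simp [hV]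
    have hlow : ∀ i ∈ Finset.Icc (k/2 + 1) k, (Real.exp 4)⁻¹ * b k ≤ b i := by
      intro i hi
      obtain ⟨hi1, hi2⟩ := Finset.mem_Icc.mp hi
      have h1 : b k ≤ Real.exp 4 * b i := hcomp i k (by omega) hi2 (by omega)
      rw [inv_mul_le_iff₀ (Real.exp_pos 4)]
      exact h1
    have hsum : ∑ i ∈ Finset.Icc (k/2 + 1) k, b i ≤ V (k + 1) := by
      rw [hksub]
      refine Finset.sum_le_sum_of_subset_of_nonneg ?_ fun i _ _ => (hbpos i).le
      exact Finset.Icc_subset_Icc (by omega) le_rfl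
    have hcard : ((k - k/2 : ℕ) : ℝ) ≥ (k:ℝ) / 2 := by
      have h1 : ((k - k/2 : ℕ) : ℝ) = (k:ℝ) - ((k/2 : ℕ) : ℝ) := by
        have : k/2 ≤ k := Nat.div_le_self k 2
        push_cast [Nat.cast_sub this]; ring
      have h2 : ((k/2 : ℕ) : ℝ) ≤ (k:ℝ)/2 := Nat.cast_div_le
      rw [h1]; linarith
    have hVge : (k:ℝ)/2 * ((Real.exp 4)⁻¹ * b k) ≤ V (k + 1) := by
      calc (k:ℝ)/2 * ((Real.exp 4)⁻¹ * b k)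
          ≤ ((k - k/2 : ℕ) : ℝ) * ((Real.exp 4)⁻¹ * b k) := by
            apply mul_le_mul_of_nonneg_right hcard
              (mul_nonneg (by positivity) (hbpos k).le)
        _ = ∑ _i ∈ Finset.Icc (k/2 + 1) k, (Real.exp 4)⁻¹ * b k := by
            rw [Finset.sum_const, nsmul_eq_mul, Nat.card_Icc]
            have hnat : k + 1 - (k/2 + 1) = k - k/2 := by omega
            rw [hnat]
        _ ≤ ∑ i ∈ Finset.Icc (k/2 + 1) k, b i := Finset.sum_le_sum hlow
        _ ≤ V (k + 1) := hsum
    have hk0 : (0:ℝ) < (k:ℝ) := by exact_mod_cast (by omega : 0 < k)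
    have hid : b k = (2 * Real.exp 4 / (k:ℝ)) * ((k:ℝ)/2 * ((Real.exp 4)⁻¹ * b k)) := by
      field_simp
    rw [hid]
    apply mul_le_mul_of_nonneg_left hVge (by positivity)
  -- divergence of V
  set α : ℝ := (max (2*c) 0 + 1) / 2 with hα
  have hα2c : 2 * c < α := by
    have := le_max_left (2*c) 0
    have := le_max_right (2*c) 0
    have hmax : max (2*c) 0 < 1 := max_lt hc2 one_pos
    simp only [hα]; linarith
  have hα0 : 0 < α := by
    have := le_max_right (2*c) 0
    simp only [hα]; linarith
  have hα1 : α ≤ 1 := by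
    have hmax : max (2*c) 0 < 1 := max_lt hc2 one_pos
    simp only [hα]; linarith
  set N : ℕ := max 1 ⌈q / (α - 2*c)⌉₊ with hN
  have hN1 : 1 ≤ N := le_max_left _ _
  have hstepmono : ∀ k : ℕ, N ≤ k →
      (k:ℝ) ^ α * b k ≤ ((k:ℝ) + 1) ^ α * b (k + 1) := by
    intro k hk
    have hk1 : 1 ≤ k := le_trans hN1 hk
    have hk0 : (0:ℝ) < (k:ℝ) := by exact_mod_cast (by omega : 0 < k)
    have hk10 : (0:ℝ) < (k:ℝ) + 1 := by positivity
    have hukpos : 0 < u (k+1) := hupos (k+1) (by omega)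
    -- key: u (k+1) ≤ ((k+1)/k)^α
    have hkey : u (k+1) ≤ (((k:ℝ) + 1) / (k:ℝ)) ^ α := by
      have hbase : (0:ℝ) < ((k:ℝ) + 1) / (k:ℝ) := by positivity
      rw [Real.rpow_def_of_pos hbase]
      have hlog1 : 1 / ((k:ℝ) + 1) ≤ Real.log (((k:ℝ) + 1) / (k:ℝ)) := by
        have h1 : Real.log ((k:ℝ) / ((k:ℝ) + 1)) ≤ (k:ℝ) / ((k:ℝ) + 1) - 1 :=
          Real.log_le_sub_one_of_pos (by positivity)
        have h2 : Real.log (((k:ℝ) + 1) / (k:ℝ)) = - Real.log ((k:ℝ) / ((k:ℝ) + 1)) := by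
          rw [← Real.log_inv]
          congr 1
          field_simp
        have h3 : (k:ℝ) / ((k:ℝ) + 1) - 1 = -(1 / ((k:ℝ) + 1)) := by
          field_simp
          ring
        rw [h2]; rw [h3] at h1; linarith
      have hlog2 : Real.log (u (k+1)) ≤ 2*c/((k:ℝ)+1) + q/((k:ℝ)+1)^2 := by
        have h1 := Real.log_le_sub_one_of_pos hukpos
        rw [hu (k+1) (by omega)] at h1 ⊢
        push_cast at h1 ⊢
        linarith
      have hgap : q / ((k:ℝ) + 1) ≤ α - 2*c := by
        rw [div_le_iff₀ hk10]
        have hceil : q / (α - 2*c) ≤ (N:ℝ) := by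
          have h1 : q / (α - 2*c) ≤ (⌈q / (α - 2*c)⌉₊ : ℝ) := Nat.le_ceil _
          have h2 : (⌈q / (α - 2*c)⌉₊ : ℝ) ≤ (N:ℝ) := by
            exact_mod_cast le_max_right 1 ⌈q / (α - 2*c)⌉₊
          linarith
        have hNk : (N:ℝ) ≤ (k:ℝ) + 1 := by
          have : (N:ℝ) ≤ (k:ℝ) := by exact_mod_cast hk
          linarith
        have h4 : q / (α - 2*c) ≤ (k:ℝ) + 1 := hceil.trans hNk
        rw [div_le_iff₀ (by linarith)] at h4
        linarith [h4]
      have hfinal : Real.log (u (k+1)) ≤ α * Real.log (((k:ℝ) + 1) / (k:ℝ)) := by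
        have h5 : 2*c/((k:ℝ)+1) + q/((k:ℝ)+1)^2 ≤ α / ((k:ℝ)+1) := by
          have heq : 2*c/((k:ℝ)+1) + q/((k:ℝ)+1)^2 = (2*c + q/((k:ℝ)+1))/((k:ℝ)+1) := by
            field_simp
          rw [heq]
          gcongr
          linarith
        have h6 : α / ((k:ℝ)+1) ≤ α * Real.log (((k:ℝ) + 1) / (k:ℝ)) := by
          rw [div_eq_mul_one_div]
          exact mul_le_mul_of_nonneg_left hlog1 hα0.le
        linarith
      calc u (k+1) = Real.exp (Real.log (u (k+1))) := (Real.exp_log hukpos).symm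
        _ ≤ Real.exp (α * Real.log (((k:ℝ) + 1) / (k:ℝ))) := Real.exp_le_exp.mpr hfinal
        _ = Real.exp (Real.log (((k:ℝ) + 1) / (k:ℝ)) * α) := by rw [mul_comm]
    -- conclude monotonicity step
    have hbsucc : b (k+1) = b k * (u (k+1))⁻¹ := by
      rw [hb]
      exact Finset.prod_Icc_succ_top (by omega) _
    rw [hbsucc]
    have hrpow : (((k:ℝ) + 1) / (k:ℝ)) ^ α = ((k:ℝ) + 1) ^ α / (k:ℝ) ^ α :=
      Real.div_rpow (by positivity) hk0.le α
    rw [hrpow] at hkey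
    have hkα : (0:ℝ) < (k:ℝ) ^ α := Real.rpow_pos_of_pos hk0 α
    have hk1α : (0:ℝ) < ((k:ℝ) + 1) ^ α := Real.rpow_pos_of_pos hk10 α
    have h7 : (k:ℝ) ^ α * u (k+1) ≤ ((k:ℝ) + 1) ^ α := by
      rw [le_div_iff₀ hkα] at hkey
      linarith [hkey]
    calc (k:ℝ) ^ α * b k = ((k:ℝ) ^ α * u (k+1)) * ((u (k+1))⁻¹ * b k) := by
          field_simp
      _ ≤ ((k:ℝ) + 1) ^ α * ((u (k+1))⁻¹ * b k) := by
          apply mul_le_mul_of_nonneg_right h7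
          exact mul_nonneg (inv_pos.mpr hukpos).le (hbpos k).le
      _ = ((k:ℝ) + 1) ^ α * (b k * (u (k+1))⁻¹) := by ring
  -- lower bound b k ≥ C₀ / k for k ≥ N
  set C₀ : ℝ := (N:ℝ) ^ α * b N with hC₀
  have hC₀pos : 0 < C₀ := by
    apply mul_pos ?_ (hbpos N)
    apply Real.rpow_pos_of_pos
    exact_mod_cast (by omega : 0 < N)
  have hmono : ∀ k : ℕ, N ≤ k → C₀ ≤ (k:ℝ) ^ α * b k := by
    intro k hk
    induction k, hk using Nat.le_induction with
    | base => exact le_rfl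
    | succ k hk ih =>
        refine ih.trans ((hstepmono k hk).trans_eq ?_)
        push_cast
        ring_nf
  have hlb : ∀ k : ℕ, N ≤ k → C₀ / (k:ℝ) ≤ b k := by
    intro k hk
    have hk1 : 1 ≤ k := le_trans hN1 hk
    have hk0 : (0:ℝ) < (k:ℝ) := by exact_mod_cast (by omega : 0 < k)
    have hk1' : (1:ℝ) ≤ (k:ℝ) := by exact_mod_cast hk1
    have h1 : (k:ℝ) ^ α ≤ (k:ℝ) ^ (1:ℝ) := Real.rpow_le_rpow_of_exponent_le hk1' hα1
    rw [Real.rpow_one] at h1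
    have hkαpos : (0:ℝ) < (k:ℝ) ^ α := Real.rpow_pos_of_pos hk0 α
    have h2 := hmono k hk
    rw [div_le_iff₀ hk0]
    calc C₀ ≤ (k:ℝ) ^ α * b k := h2
      _ ≤ (k:ℝ) * b k := mul_le_mul_of_nonneg_right h1 (hbpos k).le
      _ = b k * (k:ℝ) := mul_comm _ _
  -- harmonic sums
  set H : ℕ → ℝ := fun m => ∑ i ∈ Finset.Ioc 0 m, ((i:ℝ))⁻¹ with hH
  have hHdiv : Tendsto H atTop atTop := by
    have hrw : ∀ m : ℕ, H m = ∑ i ∈ Finset.range m, 1 / ((i:ℝ) + 1) := by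
      intro m
      show (∑ i ∈ Finset.Ioc 0 m, ((i:ℝ))⁻¹) = _
      rw [show Finset.Ioc 0 m = Finset.Ico 1 (m+1) by
        rw [← Finset.Icc_add_one_left_eq_Ioc, Finset.Ico_add_one_right_eq_Icc, zero_add]]
      rw [Finset.sum_Ico_eq_sum_range]
      apply Finset.sum_congr (by rw [Nat.add_sub_cancel])
      intro i _
      push_cast
      rw [one_div, add_comm]
    rw [funext hrw]
    exact Real.tendsto_sum_range_one_div_nat_succ_atTop
  have hVdiv : Tendsto V atTop atTop := by
    have hineq : ∀ᶠ n : ℕ in atTop, C₀ * (H (n-1) - H N) ≤ V n := by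
      filter_upwards [eventually_ge_atTop (N+1)] with n hn
      have hNn : N ≤ n - 1 := by omega
      have hsplit : V n = ∑ i ∈ Finset.Ioc 0 N, b i + ∑ i ∈ Finset.Ioc N (n-1), b i := by
        show (∑ k ∈ Finset.Icc 1 (n-1), b k) = _
        rw [show Finset.Icc 1 (n-1) = Finset.Ioc 0 (n-1) by rw [← Finset.Icc_add_one_left_eq_Ioc, zero_add]]
        rw [Finset.sum_Ioc_consecutive _ (Nat.zero_le N) hNn]
      have hsplit2 : H (n-1) - H N = ∑ i ∈ Finset.Ioc N (n-1), ((i:ℝ))⁻¹ := by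
        show (∑ i ∈ Finset.Ioc 0 (n-1), ((i:ℝ))⁻¹) - (∑ i ∈ Finset.Ioc 0 N, ((i:ℝ))⁻¹) = _
        rw [← Finset.sum_Ioc_consecutive (fun i => ((i:ℝ))⁻¹) (Nat.zero_le N) hNn]
        ring
      have hterm : ∀ i ∈ Finset.Ioc N (n-1), C₀ * ((i:ℝ))⁻¹ ≤ b i := by
        intro i hi
        obtain ⟨hNi, _⟩ := Finset.mem_Ioc.mp hi
        have := hlb i (by omega)
        rw [div_eq_mul_inv] at this
        exact this
      calc C₀ * (H (n-1) - H N) = ∑ i ∈ Finset.Ioc N (n-1), C₀ * ((i:ℝ))⁻¹ := by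
            rw [hsplit2, Finset.mul_sum]
        _ ≤ ∑ i ∈ Finset.Ioc N (n-1), b i := Finset.sum_le_sum hterm
        _ ≤ V n := by
            rw [hsplit]
            have : (0:ℝ) ≤ ∑ i ∈ Finset.Ioc 0 N, b i :=
              Finset.sum_nonneg fun i _ => (hbpos i).le
            linarith
    apply tendsto_atTop_mono' atTop hineq
    apply Tendsto.const_mul_atTop hC₀pos
    apply tendsto_atTop_add_const_right
    exact hHdiv.comp (tendsto_sub_atTop_nat 1)
  -- final assembly
  intro η hη
  set K : ℕ := max 8 ⌈2 * Real.exp 4 / η⌉₊ with hK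
  have hK8 : 8 ≤ K := le_max_left _ _
  have hKη : 2 * Real.exp 4 / η ≤ (K:ℝ) := by
    have h1 : 2 * Real.exp 4 / η ≤ (⌈2 * Real.exp 4 / η⌉₊ : ℝ) := Nat.le_ceil _
    have h2 : (⌈2 * Real.exp 4 / η⌉₊ : ℝ) ≤ (K:ℝ) := by
      exact_mod_cast le_max_right 8 ⌈2 * Real.exp 4 / η⌉₊
    linarith
  set B : ℝ := ∑ k ∈ Finset.Icc 1 K, b k with hB
  have hBb : ∀ k ∈ Finset.Icc 1 K, b k ≤ B :=
    fun k hk => Finset.single_le_sum (fun i _ => (hbpos i).le) hk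
  filter_upwards [hVdiv.eventually_ge_atTop (max (B/η) 1)] with n hn
  have hVn1 : 1 ≤ V n := le_trans (le_max_right _ _) hn
  have hVnB : B / η ≤ V n := le_trans (le_max_left _ _) hn
  have hVpos : 0 < V n := lt_of_lt_of_le one_pos hVn1
  refine ⟨hVpos, ?_⟩
  intro k hk
  obtain ⟨hk1, hkn⟩ := Finset.mem_Icc.mp hk
  have hn2 : 2 ≤ n := by
    by_contra h
    have : n - 1 = 0 := by omega
    have : V n = 0 := by rw [hV]; simp [this]
    linarith
  have hkn' : k + 1 ≤ n := by omega
  show b k ≤ η * V n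
  by_cases hkK : k ≤ K
  · have h1 : b k ≤ B := hBb k (Finset.mem_Icc.mpr ⟨hk1, hkK⟩)
    calc b k ≤ B := h1
      _ = η * (B / η) := by field_simp
      _ ≤ η * V n := mul_le_mul_of_nonneg_left hVnB hη.le
  · push_neg at hkK
    have hk8 : 8 ≤ k := by omega
    have hkpos : (0:ℝ) < (k:ℝ) := by exact_mod_cast (by omega : 0 < k)
    have h1 : b k ≤ (2 * Real.exp 4 / (k:ℝ)) * V (k + 1) := htail k hk8
    have h2 : 2 * Real.exp 4 / (k:ℝ) ≤ η := by
      rw [div_le_iff₀ hkpos]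
      have hKk : (K:ℝ) ≤ (k:ℝ) := by exact_mod_cast hkK.le
      have h3 : 2 * Real.exp 4 / η ≤ (k:ℝ) := hKη.trans hKk
      rw [div_le_iff₀ hη] at h3
      linarith
    have hVk1 : (0:ℝ) ≤ V (k+1) := by
      apply Finset.sum_nonneg fun i _ => (hbpos i).le
    calc b k ≤ (2 * Real.exp 4 / (k:ℝ)) * V (k + 1) := h1
      _ ≤ η * V (k + 1) := mul_le_mul_of_nonneg_right h2 hVk1
      _ ≤ η * V n := mul_le_mul_of_nonneg_left (hVmono hkn') hη.le

/-- Lindeberg's condition for the normalized planar ERW `M_n = S_n / a_n` when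
`Re Φ₁ < 1/2`: with `v_n = ∑_{k=1}^{n-1} 1/|a_{k+1}|²`, for every `ε > 0`,
`(1/v_n) ∑_{k=1}^{n-1} E(|ΔM_k|² 1_{|ΔM_k| ≥ ε √v_n} | F_k) → 0` in probability. -/
theorem erw_lindeberg_condition
    {Ω : Type*} [m : MeasurableSpace Ω] (P : Measure Ω) [IsProbabilityMeasure P]
    (θ : ℕ → Ω → ℝ) (I : ℕ → Ω → ℕ) (S : ℕ → Ω → ℂ)
    (hθmeas : ∀ n, Measurable (θ n)) (hImeas : ∀ n, Measurable (I n))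
    (hθrange : ∀ n ω, θ n ω ∈ Set.Ico 0 (2 * π))
    (hθident : ∀ n, 1 ≤ n → IdentDistrib (θ n) (θ 1) P P)
    (hindep : iIndepFun
      (Sum.elim (fun n => θ n) (fun n ω => (I n ω : ℝ))) P)
    (hIunif : ∀ n, 2 ≤ n → ∀ k, 1 ≤ k → k ≤ n - 1 →
      P {ω | I n ω = k} = ((n : ℝ≥0∞) - 1)⁻¹)
    (hS0 : ∀ ω, S 0 ω = 0) (hS1 : ∀ ω, S 1 ω = 1)
    (hSrec : ∀ n, 2 ≤ n → ∀ ω,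
      S n ω = S (n - 1) ω + (S (I n ω) ω - S (I n ω - 1) ω) * Complex.exp (Complex.I * θ n ω))
    (hnd : P {ω | θ 1 ω = 0 ∨ θ 1 ω = π} < 1)
    (Φ₁ : ℂ) (hΦ₁ : Φ₁ = ∫ ω, Complex.exp (Complex.I * θ 1 ω) ∂P)
    (hsub : Φ₁.re < 1 / 2)
    (M : ℕ → Ω → ℂ)
    (hM : ∀ n ω, M n ω = S n ω / ∏ j ∈ Finset.Icc 1 (n - 1), (1 + Φ₁ / (j : ℂ)))
    (𝔉 : ℕ → MeasurableSpace Ω)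
    (h𝔉 : ∀ n, 𝔉 n = ⨆ i ∈ Set.Icc 1 n, MeasurableSpace.comap (S i) inferInstance)
    (v : ℕ → ℝ)
    (hv : ∀ n, v n =
      ∑ k ∈ Finset.Icc 1 (n - 1), 1 / ‖∏ j ∈ Finset.Icc 1 k, (1 + Φ₁ / (j : ℂ))‖ ^ 2) :
    ∀ ε > 0, ∀ δ > 0, Tendsto
      (fun n : ℕ =>
        P {ω | δ ≤ |(1 / v n) *
          ∑ k ∈ Finset.Icc 1 (n - 1),
            (P[Set.indicator {ω' | ε * Real.sqrt (v n) ≤ ‖M (k + 1) ω' - M k ω'‖}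
                (fun ω' => ‖M (k + 1) ω' - M k ω'‖ ^ 2)|𝔉 k]) ω|})
      atTop (𝓝 0) := by
  intro ε hε δ hδ
  by_cases hdeg : (1:ℂ) + Φ₁ = 0
  · -- degenerate case : all the normalizers vanish, v n = 0
    have hv0 : ∀ n, v n = 0 := by
      intro n
      rw [hv]
      apply Finset.sum_eq_zero
      intro k hk
      have h1 : (1:ℕ) ∈ Finset.Icc 1 k :=
        Finset.mem_Icc.mpr ⟨le_rfl, (Finset.mem_Icc.mp hk).1⟩
      have h2 : ∏ j ∈ Finset.Icc 1 k, ((1:ℂ) + Φ₁ / (j:ℂ)) = 0 :=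
        Finset.prod_eq_zero h1 (by push_cast [div_one] at hdeg ⊢; exact hdeg)
      rw [h2]
      simp
    have hzero : ∀ n : ℕ,
        P {ω | δ ≤ |(1 / v n) *
          ∑ k ∈ Finset.Icc 1 (n - 1),
            (P[Set.indicator {ω' | ε * Real.sqrt (v n) ≤ ‖M (k + 1) ω' - M k ω'‖}
                (fun ω' => ‖M (k + 1) ω' - M k ω'‖ ^ 2)|𝔉 k]) ω|} = 0 := by
      intro n
      have hset : {ω : Ω | δ ≤ |(1 / v n) *
          ∑ k ∈ Finset.Icc 1 (n - 1),
            (P[Set.indicator {ω' | ε * Real.sqrt (v n) ≤ ‖M (k + 1) ω' - M k ω'‖}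
                (fun ω' => ‖M (k + 1) ω' - M k ω'‖ ^ 2)|𝔉 k]) ω|} = (∅ : Set Ω) := by
        apply Set.eq_empty_iff_forall_notMem.mpr
        intro ω hω
        simp only [Set.mem_setOf_eq, hv0 n, div_zero, zero_mul, abs_zero] at hω
        linarith
      rw [hset, measure_empty]
    refine Tendsto.congr' ?_ tendsto_const_nhds
    filter_upwards with n
    exact (hzero n).symm
  · -- nondegenerate case
    have hΦabs : ‖Φ₁‖ ≤ 1 := by
      rw [hΦ₁]
      refine (norm_integral_le_integral_norm _).trans ?_
      have h1 : ∀ ω : Ω, ‖Complex.exp (Complex.I * (θ 1 ω : ℂ))‖ = 1 := by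
        intro ω
        rw [Complex.norm_exp]
        simp [Complex.mul_re]
      rw [show (fun ω => ‖Complex.exp (Complex.I * (θ 1 ω : ℂ))‖) = fun _ => (1:ℝ) from
        funext h1]
      simp
    have hfac : ∀ j : ℕ, 1 ≤ j → (1:ℂ) + Φ₁ / (j:ℂ) ≠ 0 := by
      intro j hj h0
      rcases eq_or_lt_of_le hj with h1 | h2
      · apply hdeg
        rw [← h1] at h0
        push_cast [div_one] at h0
        exact h0
      · have hj2 : (2:ℝ) ≤ (j:ℝ) := by exact_mod_cast h2
        have hx : Φ₁ / (j:ℂ) = -1 := by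
          have := eq_neg_of_add_eq_zero_right h0
          rw [this]
        have hn1 : ‖Φ₁ / (j:ℂ)‖ = 1 := by rw [hx]; simp
        have hn2 : ‖Φ₁ / (j:ℂ)‖ ≤ 1/2 := by
          rw [norm_div, Complex.norm_natCast]
          rw [div_le_iff₀ (by linarith)]
          linarith
        linarith
    set A : ℕ → ℂ := fun k => ∏ j ∈ Finset.Icc 1 k, (1 + Φ₁ / (j:ℂ)) with hA
    have hA0 : ∀ k, A k ≠ 0 := by
      intro k
      exact Finset.prod_ne_zero_iff.mpr fun j hj => hfac j (Finset.mem_Icc.mp hj).1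
    -- the good event
    set G : Set Ω := {ω | ∀ n : ℕ, 2 ≤ n → 1 ≤ I n ω ∧ I n ω ≤ n - 1} with hG
    have hgood : ∀ n : ℕ, 2 ≤ n → P {ω | ¬(1 ≤ I n ω ∧ I n ω ≤ n - 1)} = 0 := by
      intro n hn
      have hTmeas : MeasurableSet (⋃ k ∈ Finset.Icc 1 (n-1), {ω | I n ω = k}) := by
        apply Finset.measurableSet_biUnion
        intro k _
        exact hImeas n (measurableSet_singleton k)
      have hTP : P (⋃ k ∈ Finset.Icc 1 (n-1), {ω | I n ω = k}) = 1 := by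
        have hmeas' : ∀ k ∈ Finset.Icc 1 (n-1), MeasurableSet {ω | I n ω = k} :=
          fun k _ => hImeas n (measurableSet_singleton k)
        have hdisj : (↑(Finset.Icc 1 (n-1)) : Set ℕ).PairwiseDisjoint
            (fun k => {ω | I n ω = k}) := by
          intro k _ l _ hkl
          apply Set.disjoint_left.mpr
          intro ω h1 h2
          exact hkl (h1.symm.trans h2)
        rw [measure_biUnion_finset hdisj hmeas']
        have hsum : ∀ k ∈ Finset.Icc 1 (n-1), P {ω | I n ω = k} = ((n:ℝ≥0∞) - 1)⁻¹ := by
          intro k hk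
          obtain ⟨h1, h2⟩ := Finset.mem_Icc.mp hk
          exact hIunif n hn k h1 h2
        rw [Finset.sum_congr rfl hsum, Finset.sum_const, Nat.card_Icc]
        have hcast : ((n:ℝ≥0∞)) - 1 = ((n - 1 : ℕ) : ℝ≥0∞) := by
          rw [show n = (n-1)+1 by omega]
          push_cast
          rw [ENNReal.add_sub_cancel_right ENNReal.one_ne_top]
        rw [hcast, nsmul_eq_mul]
        have h1 : ((n - 1 + 1 - 1 : ℕ) : ℝ≥0∞) = ((n - 1 : ℕ) : ℝ≥0∞) := by
          norm_num
        rw [h1]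
        exact ENNReal.mul_inv_cancel
          (by exact_mod_cast (by omega : n - 1 ≠ 0)) (ENNReal.natCast_ne_top _)
      have hsub2 : {ω | ¬(1 ≤ I n ω ∧ I n ω ≤ n - 1)} ⊆
          (⋃ k ∈ Finset.Icc 1 (n-1), {ω | I n ω = k})ᶜ := by
        intro ω hω hmem
        simp only [Set.mem_iUnion, Set.mem_setOf_eq, Finset.mem_Icc] at hmem
        obtain ⟨k, ⟨hk1, hk2⟩, hk3⟩ := hmem
        exact hω ⟨by omega, by omega⟩
      refine measure_mono_null hsub2 ?_
      rw [prob_compl_eq_one_sub hTmeas, hTP]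
      simp
    have hGc : P Gᶜ = 0 := by
      have hsub3 : Gᶜ ⊆ ⋃ n : ℕ, {ω | 2 ≤ n ∧ ¬(1 ≤ I n ω ∧ I n ω ≤ n - 1)} := by
        intro ω hω
        simp only [hG, Set.mem_compl_iff, Set.mem_setOf_eq, not_forall] at hω
        obtain ⟨n, hn, hn2⟩ := hω
        exact Set.mem_iUnion.mpr ⟨n, hn, hn2⟩
      refine measure_mono_null hsub3 (measure_iUnion_null fun n => ?_)
      by_cases h2 : 2 ≤ n
      · refine measure_mono_null (fun ω hω => hω.2) (hgood n h2)
      · have : {ω : Ω | 2 ≤ n ∧ ¬(1 ≤ I n ω ∧ I n ω ≤ n - 1)} = ∅ := by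
          apply Set.eq_empty_iff_forall_notMem.mpr
          intro ω hω
          exact h2 hω.1
        rw [this, measure_empty]
    -- pointwise bounds on G
    have hexp1 : ∀ (nn : ℕ) (ω : Ω), ‖Complex.exp (Complex.I * (θ nn ω : ℂ))‖ = 1 := by
      intro nn ω
      rw [Complex.norm_exp]
      simp [Complex.mul_re]
    have hstep : ∀ ω ∈ G, ∀ n : ℕ, 1 ≤ n → ‖S n ω - S (n-1) ω‖ ≤ 1 := by
      intro ω hω n
      induction n using Nat.strong_induction_on with
      | _ n ih =>
        intro hn
        rcases eq_or_lt_of_le hn with h1 | h2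
        · rw [← h1]
          norm_num [hS1 ω, hS0 ω]
        · have hn2 : 2 ≤ n := h2
          rw [hSrec n hn2 ω, add_sub_cancel_left, norm_mul, hexp1 n ω, mul_one]
          obtain ⟨hI1, hI2⟩ := hω n hn2
          exact ih (I n ω) (by omega) hI1
    have hSbound : ∀ ω ∈ G, ∀ n : ℕ, ‖S n ω‖ ≤ (n : ℝ) := by
      intro ω hω n
      induction n with
      | zero => simp [hS0 ω]
      | succ n ih =>
        have h1 : ‖S (n+1) ω - S n ω‖ ≤ 1 := by
          have := hstep ω hω (n+1) (by omega)
          simpa using this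
        calc ‖S (n+1) ω‖ = ‖S n ω + (S (n+1) ω - S n ω)‖ := by ring_nf
          _ ≤ ‖S n ω‖ + ‖S (n+1) ω - S n ω‖ := norm_add_le _ _
          _ ≤ (n:ℝ) + 1 := add_le_add ih h1
          _ = ((n+1 : ℕ) : ℝ) := by push_cast; ring
    have hΔM : ∀ ω ∈ G, ∀ k : ℕ, 1 ≤ k →
        ‖M (k+1) ω - M k ω‖ ≤ (1 + ‖Φ₁‖) / ‖A k‖ := by
      intro ω hω k hk
      obtain ⟨k', rfl⟩ : ∃ k', k = k' + 1 := ⟨k - 1, by omega⟩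
      have hkc : ((k' + 1 : ℕ) : ℝ) ≠ 0 := by positivity
      have hkpos : (0:ℝ) < ((k' + 1 : ℕ) : ℝ) := by positivity
      have hAk : A (k' + 1) = A k' * (1 + Φ₁ / ((k' + 1 : ℕ) : ℂ)) :=
        Finset.prod_Icc_succ_top (by omega) _
      have hkey : M (k'+2) ω - M (k'+1) ω =
          (S (k'+2) ω - S (k'+1) ω - (Φ₁ / ((k'+1 : ℕ) : ℂ)) * S (k'+1) ω) / A (k'+1) := by
        have hM1 : M (k'+2) ω = S (k'+2) ω / A (k'+1) := by
          rw [hM]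
          rfl
        have hM2 : M (k'+1) ω = S (k'+1) ω / A k' := by
          rw [hM]
          rfl
        rw [hM1, hM2, hAk]
        have h1 : A k' ≠ 0 := hA0 k'
        have h2 : (1:ℂ) + Φ₁ / ((k' + 1 : ℕ) : ℂ) ≠ 0 := hfac (k'+1) (by omega)
        have h3 : ((k' + 1 : ℕ) : ℂ) ≠ 0 := Nat.cast_ne_zero.mpr (by omega)
        have hbc : A k' * ((1:ℂ) + Φ₁ / ((k'+1:ℕ):ℂ)) ≠ 0 := mul_ne_zero h1 h2
        rw [div_sub_div _ _ hbc h1, div_eq_div_iff (mul_ne_zero hbc h1) hbc]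
        ring
      rw [show k' + 1 + 1 = k' + 2 by omega] at *
      rw [hkey, norm_div]
      have hApos : 0 < ‖A (k'+1)‖ := norm_pos_iff.mpr (hA0 _)
      have hnum : ‖S (k'+2) ω - S (k'+1) ω - (Φ₁ / ((k'+1:ℕ):ℂ)) * S (k'+1) ω‖
          ≤ 1 + ‖Φ₁‖ := by
        have hs1 : ‖S (k'+2) ω - S (k'+1) ω‖ ≤ 1 := by
          have := hstep ω hω (k'+2) (by omega)
          simpa using this
        have hs2 : ‖S (k'+1) ω‖ ≤ ((k'+1:ℕ):ℝ) := hSbound ω hω (k'+1)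
        have hs3 : ‖Φ₁ / ((k'+1:ℕ):ℂ)‖ = ‖Φ₁‖ / ((k'+1:ℕ):ℝ) := by
          rw [norm_div, Complex.norm_natCast]
        calc ‖S (k'+2) ω - S (k'+1) ω - (Φ₁ / ((k'+1:ℕ):ℂ)) * S (k'+1) ω‖
            ≤ ‖S (k'+2) ω - S (k'+1) ω‖ + ‖(Φ₁ / ((k'+1:ℕ):ℂ)) * S (k'+1) ω‖ :=
              norm_sub_le _ _
          _ ≤ 1 + ‖Φ₁‖ / ((k'+1:ℕ):ℝ) * ((k'+1:ℕ):ℝ) := by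
              rw [norm_mul, hs3]
              exact add_le_add hs1 (mul_le_mul_of_nonneg_left hs2 (by positivity))
          _ = 1 + ‖Φ₁‖ := by rw [div_mul_cancel₀ _ hkc]
      gcongr
    -- the sequence u and application of the analytic lemma
    set u : ℕ → ℝ := fun j => ‖(1:ℂ) + Φ₁ / (j:ℂ)‖^2 with hudef
    have hupos : ∀ j : ℕ, 1 ≤ j → 0 < u j := by
      intro j hj
      exact pow_pos (norm_pos_iff.mpr (hfac j hj)) 2
    have hueq : ∀ j : ℕ, 1 ≤ j → u j = 1 + 2 * Φ₁.re / j + ‖Φ₁‖^2 / (j:ℝ)^2 := by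
      intro j hj
      have hj0 : ((j:ℝ)) ≠ 0 := by
        have : (0:ℝ) < (j:ℝ) := by exact_mod_cast (by omega : 0 < j)
        exact this.ne'
      show ‖(1:ℂ) + Φ₁ / (j:ℂ)‖^2 = _
      rw [Complex.sq_norm, Complex.sq_norm]
      rw [Complex.normSq_apply, Complex.normSq_apply]
      simp only [Complex.add_re, Complex.add_im, Complex.one_re, Complex.one_im,
        Complex.div_re, Complex.div_im, Complex.natCast_re, Complex.natCast_im]
      have hnsq : Complex.normSq ((j:ℕ):ℂ) = (j:ℝ)^2 := by
        rw [Complex.normSq_apply]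
        simp [sq]
      rw [hnsq]
      field_simp
      ring
    have hbrw : ∀ k : ℕ, 1 / ‖A k‖^2 = ∏ j ∈ Finset.Icc 1 k, (u j)⁻¹ := by
      intro k
      show 1 / ‖∏ j ∈ Finset.Icc 1 k, ((1:ℂ) + Φ₁ / (j:ℂ))‖^2 = _
      rw [norm_prod, ← Finset.prod_pow, one_div, ← Finset.prod_inv_distrib]
    have hvrw : ∀ n : ℕ, v n = ∑ k ∈ Finset.Icc 1 (n-1), ∏ j ∈ Finset.Icc 1 k, (u j)⁻¹ := by
      intro n
      rw [hv]
      exact Finset.sum_congr rfl fun k _ => hbrw k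
    have hre1 : -1 ≤ Φ₁.re := by
      have h1 : |Φ₁.re| ≤ ‖Φ₁‖ := Complex.abs_re_le_norm Φ₁
      have h2 := neg_abs_le Φ₁.re
      linarith
    set η : ℝ := ε^2 / (2 * (1 + ‖Φ₁‖)^2) with hηdef
    have hηpos : 0 < η := by positivity
    have haux := erw_aux Φ₁.re (‖Φ₁‖^2) u (by positivity)
      (pow_le_one₀ (norm_nonneg _) hΦabs) hre1 (by linarith) hueq hupos η hηpos
    -- conclude
    refine Tendsto.congr' ?_ tendsto_const_nhds
    filter_upwards [haux] with n hn
    obtain ⟨hVpos, hbound⟩ := hn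
    have hvn : v n = ∑ k ∈ Finset.Icc 1 (n-1), ∏ j ∈ Finset.Icc 1 k, (u j)⁻¹ := hvrw n
    have hvpos : 0 < v n := by rw [hvn]; exact hVpos
    symm
    -- every conditional expectation term vanishes a.e.
    have hGmem : G ∈ ae P := by
      rw [mem_ae_iff]
      exact hGc
    have hcondzero : ∀ k : ℕ, 1 ≤ k → k ≤ n - 1 →
        (P[Set.indicator {ω' | ε * Real.sqrt (v n) ≤ ‖M (k + 1) ω' - M k ω'‖}
            (fun ω' => ‖M (k + 1) ω' - M k ω'‖ ^ 2)|𝔉 k]) =ᵐ[P] 0 := by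
      intro k hk1 hk2
      have hfzero : ∀ ω ∈ G,
          Set.indicator {ω' | ε * Real.sqrt (v n) ≤ ‖M (k + 1) ω' - M k ω'‖}
            (fun ω' => ‖M (k + 1) ω' - M k ω'‖ ^ 2) ω = 0 := by
        intro ω hωG
        apply Set.indicator_of_notMem
        simp only [Set.mem_setOf_eq, not_le]
        have h1 := hΔM ω hωG k hk1
        have h2 : 1 / ‖A k‖^2 ≤ η * v n := by
          rw [hbrw k, hvn]
          exact hbound k (Finset.mem_Icc.mpr ⟨hk1, hk2⟩)
        have hApos : 0 < ‖A k‖ := norm_pos_iff.mpr (hA0 k)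
        have h3 : ‖M (k+1) ω - M k ω‖^2 ≤ ((1 + ‖Φ₁‖) / ‖A k‖)^2 :=
          pow_le_pow_left₀ (norm_nonneg _) h1 2
        have h4 : ((1 + ‖Φ₁‖) / ‖A k‖)^2 = (1 + ‖Φ₁‖)^2 * (1 / ‖A k‖^2) := by
          rw [div_pow]
          ring
        have h5 : (1 + ‖Φ₁‖)^2 * (1 / ‖A k‖^2) ≤ (1 + ‖Φ₁‖)^2 * (η * v n) :=
          mul_le_mul_of_nonneg_left h2 (by positivity)
        have h6 : (1 + ‖Φ₁‖)^2 * (η * v n) < ε^2 * v n := by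
          have hΦ0 : (0:ℝ) < 1 + ‖Φ₁‖ := by positivity
          have heq : (1 + ‖Φ₁‖)^2 * (η * v n) = ε^2 * v n / 2 := by
            rw [hηdef]
            field_simp
          rw [heq]
          have : (0:ℝ) < ε^2 * v n := by positivity
          linarith
        have h7 : (ε * Real.sqrt (v n))^2 = ε^2 * v n := by
          rw [mul_pow, Real.sq_sqrt hvpos.le]
        have h8 : ‖M (k+1) ω - M k ω‖^2 < (ε * Real.sqrt (v n))^2 := by
          rw [h7]
          calc ‖M (k+1) ω - M k ω‖^2 ≤ ((1 + ‖Φ₁‖) / ‖A k‖)^2 := h3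
            _ = (1 + ‖Φ₁‖)^2 * (1 / ‖A k‖^2) := h4
            _ ≤ (1 + ‖Φ₁‖)^2 * (η * v n) := h5
            _ < ε^2 * v n := h6
        exact lt_of_pow_lt_pow_left₀ 2 (by positivity) h8
      have hfae : Set.indicator {ω' | ε * Real.sqrt (v n) ≤ ‖M (k + 1) ω' - M k ω'‖}
          (fun ω' => ‖M (k + 1) ω' - M k ω'‖ ^ 2) =ᵐ[P] 0 :=
        Filter.eventuallyEq_of_mem hGmem hfzero
      have hcc := condExp_congr_ae (m := 𝔉 k) (μ := P) hfae
      rwa [condExp_zero] at hcc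
    have hall : ∀ᵐ ω ∂P, ∀ k ∈ Finset.Icc 1 (n-1),
        (P[Set.indicator {ω' | ε * Real.sqrt (v n) ≤ ‖M (k + 1) ω' - M k ω'‖}
            (fun ω' => ‖M (k + 1) ω' - M k ω'‖ ^ 2)|𝔉 k]) ω = 0 := by
      rw [eventually_all_finset]
      intro k hk
      obtain ⟨hk1, hk2⟩ := Finset.mem_Icc.mp hk
      have := hcondzero k hk1 hk2
      filter_upwards [this] with ω hω
      simpa using hω
    refine measure_mono_null ?_ (ae_iff.mp hall)
    intro ω hω
    simp only [Set.mem_setOf_eq] at hω ⊢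
    intro hforall
    have hsum0 : ∑ k ∈ Finset.Icc 1 (n-1),
        (P[Set.indicator {ω' | ε * Real.sqrt (v n) ≤ ‖M (k + 1) ω' - M k ω'‖}
            (fun ω' => ‖M (k + 1) ω' - M k ω'‖ ^ 2)|𝔉 k]) ω = 0 :=
      Finset.sum_eq_zero hforall
    rw [hsum0, mul_zero, abs_zero] at hω
    linarith
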